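/- Let M be an m²×n² real matrix such that R_{m×n}(M) is symmetric and has rank one. Then there exists an m×n real matrix A such that M = A ⊗ A if and only if the trace of R_{m×n}(M) is strictly positive. -/

import Mathlib

open Matrix Kronecker

/-- `vec A` is the vector of entries of the matrix `A`, indexed by pairs. -/
def vec {F : Type*} [Field F] {α β : Type*} (A : Matrix α β F) : α × β → F :=
  fun p => A p.1 p.2

/-- The rearrangement operator `R_{m×n}`:
`R M ((i,j),(k,l)) = M ((i,k),(j,l))`. -/
def R {F : Type*} [Field F] {m n : ℕ}
    (M : Matrix (Fin m × Fin m) (Fin n × Fin n) F) :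
    Matrix (Fin m × Fin n) (Fin m × Fin n) F :=
  fun p q => M (p.1, q.1) (p.2, q.2)

/-- The `j`-th rearrangement operator `R^{(j)}_{m×n}` on `m^k × n^k` matrices
(here with `k` replaced by `k+1` so that `k ≥ 1` automatically): the entry at
row `(a,b)` and column `(r,c)` is the entry of `M` at the tuples obtained from
`r` and `c` by inserting `a` resp. `b` at position `j`. -/
def Rj {F : Type*} [Field F] {m n k : ℕ} (j : Fin (k + 1))
    (M : Matrix (Fin (k + 1) → Fin m) (Fin (k + 1) → Fin n) F) :
    Matrix (Fin m × Fin n) ((Fin k → Fin m) × (Fin k → Fin n)) F :=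
  fun p q => M (j.insertNth p.1 q.1) (j.insertNth p.2 q.2)

/-- `R^Σ_{m×n} = Σ_j R^{(j)}_{m×n}`. -/
def RSigma {F : Type*} [Field F] {m n k : ℕ}
    (M : Matrix (Fin (k + 1) → Fin m) (Fin (k + 1) → Fin n) F) :
    Matrix (Fin m × Fin n) ((Fin k → Fin m) × (Fin k → Fin n)) F :=
  ∑ j : Fin (k + 1), Rj j M

/-- The `k`-th Kronecker power of an `m×n` matrix, indexed by tuples. -/
def kpow {F : Type*} [Field F] {m n : ℕ} (A : Matrix (Fin m) (Fin n) F) (k : ℕ) :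
    Matrix (Fin k → Fin m) (Fin k → Fin n) F :=
  fun r c => ∏ i, A (r i) (c i)

/-- The `k`-fold Kronecker product of a family of `m×n` matrices,
indexed by tuples. -/
def kprodFam {F : Type*} [Field F] {m n k : ℕ}
    (A : Fin k → Matrix (Fin m) (Fin n) F) :
    Matrix (Fin k → Fin m) (Fin k → Fin n) F :=
  fun r c => ∏ i, A i (r i) (c i)

/-- A real matrix `M` with `R_{m×n}(M)` symmetric of rank one
has a real Kronecker square root iff `tr(R_{m×n}(M)) > 0`. -/
lemma rank_one_fac {ι : Type*} [Fintype ι] [DecidableEq ι] (S : Matrix ι ι ℝ)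
    (h : S.rank = 1) : ∃ u w : ι → ℝ, ∀ i j, S i j = u i * w j := by
  rw [Matrix.rank, finrank_eq_one_iff'] at h
  obtain ⟨⟨v, hv⟩, hv0, hall⟩ := h
  have hcol : ∀ j, (fun i => S i j) ∈ LinearMap.range S.mulVecLin := by
    intro j
    exact ⟨Pi.single j 1, by ext i; simp [Matrix.mulVecLin, Matrix.mulVec_single]⟩
  choose c hc using fun j => hall ⟨fun i => S i j, hcol j⟩
  refine ⟨v, c, fun i j => ?_⟩
  have h2 : c j • v = fun i => S i j := congrArg Subtype.val (hc j)
  have := congrFun h2 i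
  simp [mul_comm] at this ⊢
  linarith

theorem stmt_4 {m n : ℕ}
    (M : Matrix (Fin m × Fin m) (Fin n × Fin n) ℝ)
    (hsymm : (R M).IsSymm) (hrank : (R M).rank = 1) :
    (∃ A : Matrix (Fin m) (Fin n) ℝ, M = A ⊗ₖ A) ↔ 0 < (R M).trace := by
  constructor
  · rintro ⟨A, rfl⟩
    have hA : A ≠ 0 := by
      rintro rfl
      rw [show R ((0 : Matrix (Fin m) (Fin n) ℝ) ⊗ₖ 0) = 0 by
        ext p q; simp [R, kroneckerMap_apply]] at hrank
      simp [Matrix.rank_zero] at hrank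
    obtain ⟨i, j, hij⟩ : ∃ i j, A i j ≠ 0 := by
      by_contra h; push_neg at h; exact hA (by ext i j; simp [h])
    have htr : (R (A ⊗ₖ A)).trace = ∑ p : Fin m × Fin n, A p.1 p.2 * A p.1 p.2 := by
      simp [Matrix.trace, Matrix.diag, R, kroneckerMap_apply]
    rw [htr]
    exact Finset.sum_pos' (fun p _ => mul_self_nonneg _)
      ⟨(i, j), Finset.mem_univ _, mul_self_pos.mpr hij⟩
  · intro htr
    obtain ⟨u, w, huw⟩ := rank_one_fac _ hrank
    have hsym : ∀ p q, u p * w q = u q * w p := by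
      intro p q
      have := hsymm.apply p q
      rw [huw, huw] at this
      linarith [this]
    have htr' : (0:ℝ) < ∑ p : Fin m × Fin n, u p * w p := by
      have : (R M).trace = ∑ p : Fin m × Fin n, u p * w p := by
        simp [Matrix.trace, Matrix.diag, huw]
      linarith [this ▸ htr]
    obtain ⟨p0, hp0⟩ : ∃ p0, 0 < u p0 * w p0 := by
      by_contra h; push_neg at h
      exact absurd (Finset.sum_nonpos fun p _ => h p) (not_le.mpr htr')
    have hu0 : u p0 ≠ 0 := fun h => by simp [h] at hp0
    set c : ℝ := w p0 / u p0 with hc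
    have hcpos : 0 < c := by
      have : c = (u p0 * w p0) / (u p0 ^ 2) := by rw [hc, pow_two, mul_div_mul_left _ _ hu0]
      rw [this]
      exact div_pos hp0 (by positivity)
    have hw : ∀ q, w q = c * u q := by
      intro q
      have := hsym p0 q
      rw [hc, div_mul_eq_mul_div, eq_div_iff hu0]
      linarith [this]
    refine ⟨Matrix.of fun i j => Real.sqrt c * u (i, j), ?_⟩
    ext ⟨i, k⟩ ⟨j, l⟩
    have hM : M (i, k) (j, l) = u (i, j) * w (k, l) := huw (i, j) (k, l)
    rw [hM, hw]
    simp only [kroneckerMap_apply, Matrix.of_apply]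
    have hs : Real.sqrt c * Real.sqrt c = c := Real.mul_self_sqrt hcpos.le
    have key : (Real.sqrt c * u (i, j)) * (Real.sqrt c * u (k, l))
        = c * (u (i, j) * u (k, l)) := by rw [mul_mul_mul_comm, hs]
    rw [key]; ring
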